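/- Let R be a commutative Noetherian ring and *R its ultrapower over an ultrafilter. For any ideal I of R, the set of minimal primes of *R over the extension I·*R is exactly {p·*R : p a minimal prime of R over I}; in particular every prime of *R containing I·*R contains p·*R for some minimal prime p over I. -/

import Mathlib

open Filter

/-- The diagonal embedding of `R` into its ultrapower `*R = (ι → R)/U`. -/
noncomputable def diag {ι : Type*} (U : Ultrafilter ι) (R : Type*) [CommRing R] :
    R →+* Filter.Germ (U : Filter ι) R :=
  (Filter.Germ.coeRingHom (U : Filter ι)).comp (Pi.constRingHom ι R)

section Aux

variable {ι R : Type*} [CommRing R] (U : Ultrafilter ι)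

/-- The "germwise" extension of an ideal `a` to the ultrapower: germs of functions that lie
in `a` almost everywhere. -/
def germIdeal (a : Ideal R) : Ideal (Filter.Germ (U : Filter ι) R) where
  carrier := {x | x.liftOn (fun f => ∀ᶠ i in U, f i ∈ a) fun f g h =>
    propext ⟨fun hf => ((h : ∀ᶠ i in (U : Filter ι), f i = g i).and hf).mono
        fun i ⟨h1, h2⟩ => h1 ▸ h2,
      fun hg => ((h : ∀ᶠ i in (U : Filter ι), f i = g i).and hg).mono
        fun i ⟨h1, h2⟩ => h1.symm ▸ h2⟩}
  zero_mem' := Eventually.of_forall fun _ => a.zero_mem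
  add_mem' := by
    intro x y
    refine x.inductionOn₂ y fun f g hf hg => ?_
    exact (hf.and hg).mono fun i ⟨h1, h2⟩ => a.add_mem h1 h2
  smul_mem' := by
    intro c x
    refine c.inductionOn₂ x fun f g hg => ?_
    exact hg.mono fun i h => a.mul_mem_left (f i) h

theorem mem_germIdeal {a : Ideal R} (f : ι → R) :
    (↑f : Filter.Germ (U : Filter ι) R) ∈ germIdeal U a ↔ ∀ᶠ i in U, f i ∈ a :=
  Iff.rfl

theorem comap_germIdeal (a : Ideal R) : (germIdeal U a).comap (diag U R) = a := by
  ext x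
  simp only [Ideal.mem_comap]
  show ((↑(fun _ : ι => x) : Filter.Germ (U : Filter ι) R) ∈ germIdeal U a) ↔ x ∈ a
  rw [mem_germIdeal]
  exact eventually_const

theorem germIdeal_isPrime (p : Ideal R) [hp : p.IsPrime] : (germIdeal U p).IsPrime := by
  constructor
  · intro h
    have h1 : (1 : Filter.Germ (U : Filter ι) R) ∈ germIdeal U p := h ▸ Submodule.mem_top
    have : (↑(fun _ : ι => (1 : R)) : Filter.Germ (U : Filter ι) R) ∈ germIdeal U p := h1
    rw [mem_germIdeal] at this
    exact hp.ne_top ((Ideal.eq_top_iff_one p).mpr (eventually_const.mp this))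
  · intro x y
    refine x.inductionOn₂ y fun f g hfg => ?_
    have : ∀ᶠ i in (U : Filter ι), f i ∈ p ∨ g i ∈ p := by
      have : (↑(f * g) : Filter.Germ (U : Filter ι) R) ∈ germIdeal U p := hfg
      exact (mem_germIdeal U _).mp this |>.mono fun i h => hp.mem_or_mem h
    rcases (Ultrafilter.eventually_or (f := U)).mp this with h | h
    · exact Or.inl h
    · exact Or.inr h

theorem map_diag_eq_germIdeal [IsNoetherianRing R] (a : Ideal R) :
    a.map (diag U R) = germIdeal U a := by
  refine le_antisymm (Ideal.map_le_iff_le_comap.mpr ?_) ?_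
  · intro x hx
    rw [Ideal.mem_comap]
    exact (mem_germIdeal U (fun _ => x)).mpr (Eventually.of_forall fun _ => hx)
  · intro x hx
    induction x using Filter.Germ.inductionOn with
    | h f =>
    rw [mem_germIdeal] at hx
    obtain ⟨s, hs⟩ : a.FG := IsNoetherian.noetherian a
    -- choose coefficients
    have hcoeff : ∀ i : ι, f i ∈ a → ∃ c : R → R, ∑ j ∈ s, c j • j = f i := by
      intro i hi
      rw [← hs] at hi
      obtain ⟨c, -, hc⟩ := Submodule.mem_span_finset.mp hi
      exact ⟨c, hc⟩
    classical
    set c : ι → R → R := fun i =>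
      if h : f i ∈ a then (hcoeff i h).choose else 0 with hc
    have heq : ∀ᶠ i in (U : Filter ι), f i = ∑ j ∈ s, c i j * j := by
      refine hx.mono fun i hi => ?_
      have := (hcoeff i hi).choose_spec
      simp only [hc, dif_pos hi, smul_eq_mul] at this ⊢
      exact this.symm
    have hgerm : (↑f : Filter.Germ (U : Filter ι) R) =
        ∑ j ∈ s, (↑(fun i => c i j) : Filter.Germ (U : Filter ι) R) * diag U R j := by
      have : (↑f : Filter.Germ (U : Filter ι) R) =
          ↑(fun i => ∑ j ∈ s, c i j * j) := Filter.Germ.coe_eq.mpr heq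
      rw [this]
      have : (fun i => ∑ j ∈ s, c i j * j) =
          ∑ j ∈ s, (fun i => c i j) * (fun _ => j) := by
        funext i
        simp [Finset.sum_apply]
      rw [this]
      have hms := map_sum (Filter.Germ.coeRingHom (U : Filter ι))
        (fun j => (fun i => c i j) * (fun _ => j)) s
      exact hms.trans (Finset.sum_congr rfl fun j hj => rfl)
    rw [hgerm]
    refine Ideal.sum_mem _ fun j hj => ?_
    refine Ideal.mul_mem_left _ _ (Ideal.mem_map_of_mem _ ?_)
    rw [← hs]
    exact Ideal.subset_span hj

end Aux

/-- For a commutative Noetherian ring `R` with ultrapower `*R` and an ideal `I ⊆ R`, the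
minimal primes of `*R` over the extension `I·*R` are exactly the extensions `p·*R` of the
minimal primes `p` of `R` over `I`; in particular every prime of `*R` containing `I·*R`
contains some such `p·*R`. -/
theorem ultrapower_minimalPrimes {ι R : Type*} [CommRing R] [IsNoetherianRing R]
    (U : Ultrafilter ι) (I : Ideal R) :
    (I.map (diag U R)).minimalPrimes = (Ideal.map (diag U R)) '' I.minimalPrimes ∧
    ∀ q : Ideal (Filter.Germ (U : Filter ι) R), q.IsPrime → I.map (diag U R) ≤ q →
      ∃ p ∈ I.minimalPrimes, p.map (diag U R) ≤ q := by
  have key : ∀ q : Ideal (Filter.Germ (U : Filter ι) R), q.IsPrime → I.map (diag U R) ≤ q →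
      ∃ p ∈ I.minimalPrimes, p.map (diag U R) ≤ q := by
    intro q hq hIq
    haveI := hq
    have hIc : I ≤ q.comap (diag U R) := fun x hx => hIq (Ideal.mem_map_of_mem _ hx)
    obtain ⟨p, hp, hpq⟩ := Ideal.exists_minimalPrimes_le hIc
    exact ⟨p, hp, Ideal.map_le_iff_le_comap.mpr hpq⟩
  refine ⟨Set.Subset.antisymm ?_ ?_, key⟩
  · intro Q hQ
    replace hQ : Minimal (fun q : Ideal (Filter.Germ (U : Filter ι) R) =>
      q.IsPrime ∧ I.map (diag U R) ≤ q) Q := hQ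
    obtain ⟨p, hp, hpQ⟩ := key Q hQ.prop.1 hQ.prop.2
    replace hp : Minimal (fun q : Ideal R => q.IsPrime ∧ I ≤ q) p := hp
    haveI : p.IsPrime := hp.prop.1
    have hmp : (p.map (diag U R)).IsPrime := by
      rw [map_diag_eq_germIdeal]
      exact germIdeal_isPrime U p
    exact ⟨p, hp, le_antisymm hpQ (hQ.le_of_le ⟨hmp, Ideal.map_mono hp.prop.2⟩ hpQ)⟩
  · rintro _ ⟨p, hp, rfl⟩
    replace hp : Minimal (fun q : Ideal R => q.IsPrime ∧ I ≤ q) p := hp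
    haveI : p.IsPrime := hp.prop.1
    have hmp : (p.map (diag U R)).IsPrime := by
      rw [map_diag_eq_germIdeal]
      exact germIdeal_isPrime U p
    refine ⟨⟨hmp, Ideal.map_mono hp.prop.2⟩, ?_⟩
    rintro q ⟨hq, hIq⟩ hqle
    obtain ⟨p', hp', hp'q⟩ := key q hq hIq
    replace hp' : Minimal (fun q : Ideal R => q.IsPrime ∧ I ≤ q) p' := hp'
    have hp'p : p' ≤ p := by
      have h1 : p' ≤ q.comap (diag U R) := Ideal.map_le_iff_le_comap.mp hp'q
      have h2 : q.comap (diag U R) ≤ (p.map (diag U R)).comap (diag U R) :=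
        Ideal.comap_mono hqle
      rw [map_diag_eq_germIdeal, comap_germIdeal] at h2
      exact h1.trans h2
    have : p ≤ p' := hp.le_of_le hp'.prop hp'p
    exact le_trans (Ideal.map_mono this) hp'q
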